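/- In the zero-temperature majority dynamics on the hexagonal lattice ℍ: for every initial configuration σ ∈ {−1,+1}^ℍ, every legal flip sequence starting from σ, and every site x, the spin at x is flipped at most 8 times during the sequence. -/

import Mathlib

open MeasureTheory ENNReal

/-- Sites of the hexagonal (honeycomb) lattice ℍ, coordinatized by ℤ × ℤ. -/
abbrev Site : Type := ℤ × ℤ

/-- A spin configuration: `true` stands for spin +1, `false` for spin −1. -/
abbrev Config : Type := Site → Bool

/-- The three neighbors of a site: `(i,j)` is adjacent to `(i−1,j)`, `(i+1,j)`, and to
`(i,j+1)` if `i+j` is even, to `(i,j−1)` if `i+j` is odd. -/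
def nbrs (x : Site) : List Site :=
  [(x.1 - 1, x.2), (x.1 + 1, x.2),
   if Even (x.1 + x.2) then (x.1, x.2 + 1) else (x.1, x.2 - 1)]

/-- Adjacency in the hexagonal lattice. -/
def Adj (x y : Site) : Prop := y ∈ nbrs x

instance : DecidableRel Adj := fun x y => by unfold Adj; infer_instance

/-- Flipping the spin at site `x` is legal for the zero-temperature majority dynamics:
`σ x` disagrees with at least two of the three spins of the neighbors of `x`. -/
def LegalMaj (σ : Config) (x : Site) : Prop :=
  2 ≤ (nbrs x).countP (fun y => σ y != σ x)

/-- The configuration obtained from `σ` by flipping the spin at `x`. -/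
def flipAt (σ : Config) (x : Site) : Config := Function.update σ x (!(σ x))

/-- `η 0, η 1, …` is a legal flip sequence of the majority dynamics, of length `m ∈ ℕ∞`
(`m = ⊤` for an infinite sequence): each configuration is obtained from the previous one by
flipping the spin at a single site where the flip is legal. -/
def IsLegalFlipSeqMaj (η : ℕ → Config) (m : ℕ∞) : Prop :=
  ∀ n : ℕ, (n : ℕ∞) + 1 ≤ m → ∃ x, LegalMaj (η n) x ∧ η (n + 1) = flipAt (η n) x


def ed (σ : Config) (a b : Site) : ℤ := if σ a != σ b then 1 else 0

def Phi0 (σ : Config) : ℤ :=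
  ed σ (0,0) (-1,0)
  + ed σ (0,0) (1,0)
  + ed σ (0,0) (0,1)
  + ed σ (1,0) (1,-1)
  + ed σ (1,-1) (0,-1)
  + ed σ (0,-1) (-1,-1)
  + ed σ (-1,-1) (-1,0)
  + ed σ (1,0) (2,0)
  + ed σ (2,0) (2,1)
  + ed σ (2,1) (1,1)
  + ed σ (1,1) (0,1)
  + ed σ (0,1) (-1,1)
  + ed σ (-1,1) (-2,1)
  + ed σ (-2,1) (-2,0)
  + ed σ (-2,0) (-1,0)

def Psi0 (σ : Config) : ℤ :=
  Phi0 σ + (if 2 ≤ ed σ (-1,0) (0,0) + ed σ (1,0) (0,0) + ed σ (0,1) (0,0) then 1 else 0)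

lemma ed_bounds (σ : Config) (a b : Site) : 0 ≤ ed σ a b ∧ ed σ a b ≤ 1 := by
  unfold ed; split <;> norm_num

lemma Psi0_nonneg (σ : Config) : 0 ≤ Psi0 σ := by
  unfold Psi0 Phi0
  split <;>
  linarith [(ed_bounds σ (0,0) (-1,0)).1, (ed_bounds σ (0,0) (1,0)).1, (ed_bounds σ (0,0) (0,1)).1, (ed_bounds σ (1,0) (1,-1)).1, (ed_bounds σ (1,-1) (0,-1)).1, (ed_bounds σ (0,-1) (-1,-1)).1, (ed_bounds σ (-1,-1) (-1,0)).1, (ed_bounds σ (1,0) (2,0)).1, (ed_bounds σ (2,0) (2,1)).1, (ed_bounds σ (2,1) (1,1)).1, (ed_bounds σ (1,1) (0,1)).1, (ed_bounds σ (0,1) (-1,1)).1, (ed_bounds σ (-1,1) (-2,1)).1, (ed_bounds σ (-2,1) (-2,0)).1, (ed_bounds σ (-2,0) (-1,0)).1,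
    (ed_bounds σ (-1,0) (0,0)).1, (ed_bounds σ (1,0) (0,0)).1, (ed_bounds σ (0,1) (0,0)).1]

lemma Psi0_le (σ : Config) : Psi0 σ ≤ 16 := by
  unfold Psi0 Phi0
  split <;>
  linarith [(ed_bounds σ (0,0) (-1,0)).2, (ed_bounds σ (0,0) (1,0)).2, (ed_bounds σ (0,0) (0,1)).2, (ed_bounds σ (1,0) (1,-1)).2, (ed_bounds σ (1,-1) (0,-1)).2, (ed_bounds σ (0,-1) (-1,-1)).2, (ed_bounds σ (-1,-1) (-1,0)).2, (ed_bounds σ (1,0) (2,0)).2, (ed_bounds σ (2,0) (2,1)).2, (ed_bounds σ (2,1) (1,1)).2, (ed_bounds σ (1,1) (0,1)).2, (ed_bounds σ (0,1) (-1,1)).2, (ed_bounds σ (-1,1) (-2,1)).2, (ed_bounds σ (-2,1) (-2,0)).2, (ed_bounds σ (-2,0) (-1,0)).2]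

lemma legal_iff (σ : Config) (y : Site) (n1 n2 n3 : Site) (hn : nbrs y = [n1,n2,n3]) :
    LegalMaj σ y ↔ 2 ≤ ed σ n1 y + ed σ n2 y + ed σ n3 y := by
  simp only [LegalMaj, hn, List.countP_cons, List.countP_nil, ed]
  rcases σ n1 <;> rcases σ n2 <;> rcases σ n3 <;> rcases σ y <;> simp


set_option maxHeartbeats 4000000 in
lemma flip_case0 (σ : Config) (h : LegalMaj σ (0,0)) : Psi0 (flipAt σ (0,0)) + 2 ≤ Psi0 σ := by
  rw [legal_iff σ (0,0) (-1,0) (1,0) (0,1) (by decide)] at h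
  simp only [ed] at h
  simp only [Psi0, Phi0, ed, flipAt, Function.update_apply, Prod.mk.injEq]
  norm_num
  cases h1 : σ ((0:ℤ),(0:ℤ)) <;>
    cases h2 : σ ((-1:ℤ),(0:ℤ)) <;>
    cases h3 : σ ((1:ℤ),(0:ℤ)) <;>
    cases h4 : σ ((0:ℤ),(1:ℤ)) <;>
    simp_all <;> omega


set_option maxHeartbeats 4000000 in
lemma flip_case1 (σ : Config) (h : LegalMaj σ (-1,0)) : Psi0 (flipAt σ (-1,0)) ≤ Psi0 σ := by
  rw [legal_iff σ (-1,0) (-2,0) (0,0) (-1,-1) (by decide)] at h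
  simp only [ed] at h
  simp only [Psi0, Phi0, ed, flipAt, Function.update_apply, Prod.mk.injEq]
  norm_num
  cases h1 : σ ((-1:ℤ),(0:ℤ)) <;>
    cases h2 : σ ((-2:ℤ),(0:ℤ)) <;>
    cases h3 : σ ((0:ℤ),(0:ℤ)) <;>
    cases h4 : σ ((-1:ℤ),(-1:ℤ)) <;>
    cases h5 : σ ((1:ℤ),(0:ℤ)) <;>
    cases h6 : σ ((0:ℤ),(1:ℤ)) <;>
    simp_all <;> omega


set_option maxHeartbeats 4000000 in
lemma flip_case2 (σ : Config) (h : LegalMaj σ (1,0)) : Psi0 (flipAt σ (1,0)) ≤ Psi0 σ := by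
  rw [legal_iff σ (1,0) (0,0) (2,0) (1,-1) (by decide)] at h
  simp only [ed] at h
  simp only [Psi0, Phi0, ed, flipAt, Function.update_apply, Prod.mk.injEq]
  norm_num
  cases h1 : σ ((1:ℤ),(0:ℤ)) <;>
    cases h2 : σ ((0:ℤ),(0:ℤ)) <;>
    cases h3 : σ ((2:ℤ),(0:ℤ)) <;>
    cases h4 : σ ((1:ℤ),(-1:ℤ)) <;>
    cases h5 : σ ((-1:ℤ),(0:ℤ)) <;>
    cases h6 : σ ((0:ℤ),(1:ℤ)) <;>
    simp_all <;> omega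


set_option maxHeartbeats 4000000 in
lemma flip_case3 (σ : Config) (h : LegalMaj σ (0,1)) : Psi0 (flipAt σ (0,1)) ≤ Psi0 σ := by
  rw [legal_iff σ (0,1) (-1,1) (1,1) (0,0) (by decide)] at h
  simp only [ed] at h
  simp only [Psi0, Phi0, ed, flipAt, Function.update_apply, Prod.mk.injEq]
  norm_num
  cases h1 : σ ((0:ℤ),(1:ℤ)) <;>
    cases h2 : σ ((-1:ℤ),(1:ℤ)) <;>
    cases h3 : σ ((1:ℤ),(1:ℤ)) <;>
    cases h4 : σ ((0:ℤ),(0:ℤ)) <;>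
    cases h5 : σ ((-1:ℤ),(0:ℤ)) <;>
    cases h6 : σ ((1:ℤ),(0:ℤ)) <;>
    simp_all <;> omega


set_option maxHeartbeats 4000000 in
lemma flip_case4 (σ : Config) (h : LegalMaj σ (1,-1)) : Psi0 (flipAt σ (1,-1)) ≤ Psi0 σ := by
  rw [legal_iff σ (1,-1) (0,-1) (2,-1) (1,0) (by decide)] at h
  simp only [ed] at h
  simp only [Psi0, Phi0, ed, flipAt, Function.update_apply, Prod.mk.injEq]
  norm_num
  cases h1 : σ ((1:ℤ),(-1:ℤ)) <;>
    cases h2 : σ ((0:ℤ),(-1:ℤ)) <;>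
    cases h3 : σ ((2:ℤ),(-1:ℤ)) <;>
    cases h4 : σ ((1:ℤ),(0:ℤ)) <;>
    simp_all <;> omega


set_option maxHeartbeats 4000000 in
lemma flip_case5 (σ : Config) (h : LegalMaj σ (0,-1)) : Psi0 (flipAt σ (0,-1)) ≤ Psi0 σ := by
  rw [legal_iff σ (0,-1) (-1,-1) (1,-1) (0,-2) (by decide)] at h
  simp only [ed] at h
  simp only [Psi0, Phi0, ed, flipAt, Function.update_apply, Prod.mk.injEq]
  norm_num
  cases h1 : σ ((0:ℤ),(-1:ℤ)) <;>
    cases h2 : σ ((-1:ℤ),(-1:ℤ)) <;>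
    cases h3 : σ ((1:ℤ),(-1:ℤ)) <;>
    cases h4 : σ ((0:ℤ),(-2:ℤ)) <;>
    simp_all <;> omega


set_option maxHeartbeats 4000000 in
lemma flip_case6 (σ : Config) (h : LegalMaj σ (-1,-1)) : Psi0 (flipAt σ (-1,-1)) ≤ Psi0 σ := by
  rw [legal_iff σ (-1,-1) (-2,-1) (0,-1) (-1,0) (by decide)] at h
  simp only [ed] at h
  simp only [Psi0, Phi0, ed, flipAt, Function.update_apply, Prod.mk.injEq]
  norm_num
  cases h1 : σ ((-1:ℤ),(-1:ℤ)) <;>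
    cases h2 : σ ((-2:ℤ),(-1:ℤ)) <;>
    cases h3 : σ ((0:ℤ),(-1:ℤ)) <;>
    cases h4 : σ ((-1:ℤ),(0:ℤ)) <;>
    simp_all <;> omega


set_option maxHeartbeats 4000000 in
lemma flip_case7 (σ : Config) (h : LegalMaj σ (2,0)) : Psi0 (flipAt σ (2,0)) ≤ Psi0 σ := by
  rw [legal_iff σ (2,0) (1,0) (3,0) (2,1) (by decide)] at h
  simp only [ed] at h
  simp only [Psi0, Phi0, ed, flipAt, Function.update_apply, Prod.mk.injEq]
  norm_num
  cases h1 : σ ((2:ℤ),(0:ℤ)) <;>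
    cases h2 : σ ((1:ℤ),(0:ℤ)) <;>
    cases h3 : σ ((3:ℤ),(0:ℤ)) <;>
    cases h4 : σ ((2:ℤ),(1:ℤ)) <;>
    simp_all <;> omega


set_option maxHeartbeats 4000000 in
lemma flip_case8 (σ : Config) (h : LegalMaj σ (2,1)) : Psi0 (flipAt σ (2,1)) ≤ Psi0 σ := by
  rw [legal_iff σ (2,1) (1,1) (3,1) (2,0) (by decide)] at h
  simp only [ed] at h
  simp only [Psi0, Phi0, ed, flipAt, Function.update_apply, Prod.mk.injEq]
  norm_num
  cases h1 : σ ((2:ℤ),(1:ℤ)) <;>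
    cases h2 : σ ((1:ℤ),(1:ℤ)) <;>
    cases h3 : σ ((3:ℤ),(1:ℤ)) <;>
    cases h4 : σ ((2:ℤ),(0:ℤ)) <;>
    simp_all <;> omega


set_option maxHeartbeats 4000000 in
lemma flip_case9 (σ : Config) (h : LegalMaj σ (1,1)) : Psi0 (flipAt σ (1,1)) ≤ Psi0 σ := by
  rw [legal_iff σ (1,1) (0,1) (2,1) (1,2) (by decide)] at h
  simp only [ed] at h
  simp only [Psi0, Phi0, ed, flipAt, Function.update_apply, Prod.mk.injEq]
  norm_num
  cases h1 : σ ((1:ℤ),(1:ℤ)) <;>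
    cases h2 : σ ((0:ℤ),(1:ℤ)) <;>
    cases h3 : σ ((2:ℤ),(1:ℤ)) <;>
    cases h4 : σ ((1:ℤ),(2:ℤ)) <;>
    simp_all <;> omega


set_option maxHeartbeats 4000000 in
lemma flip_case10 (σ : Config) (h : LegalMaj σ (-1,1)) : Psi0 (flipAt σ (-1,1)) ≤ Psi0 σ := by
  rw [legal_iff σ (-1,1) (-2,1) (0,1) (-1,2) (by decide)] at h
  simp only [ed] at h
  simp only [Psi0, Phi0, ed, flipAt, Function.update_apply, Prod.mk.injEq]
  norm_num
  cases h1 : σ ((-1:ℤ),(1:ℤ)) <;>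
    cases h2 : σ ((-2:ℤ),(1:ℤ)) <;>
    cases h3 : σ ((0:ℤ),(1:ℤ)) <;>
    cases h4 : σ ((-1:ℤ),(2:ℤ)) <;>
    simp_all <;> omega


set_option maxHeartbeats 4000000 in
lemma flip_case11 (σ : Config) (h : LegalMaj σ (-2,1)) : Psi0 (flipAt σ (-2,1)) ≤ Psi0 σ := by
  rw [legal_iff σ (-2,1) (-3,1) (-1,1) (-2,0) (by decide)] at h
  simp only [ed] at h
  simp only [Psi0, Phi0, ed, flipAt, Function.update_apply, Prod.mk.injEq]
  norm_num
  cases h1 : σ ((-2:ℤ),(1:ℤ)) <;>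
    cases h2 : σ ((-3:ℤ),(1:ℤ)) <;>
    cases h3 : σ ((-1:ℤ),(1:ℤ)) <;>
    cases h4 : σ ((-2:ℤ),(0:ℤ)) <;>
    simp_all <;> omega


set_option maxHeartbeats 4000000 in
lemma flip_case12 (σ : Config) (h : LegalMaj σ (-2,0)) : Psi0 (flipAt σ (-2,0)) ≤ Psi0 σ := by
  rw [legal_iff σ (-2,0) (-3,0) (-1,0) (-2,1) (by decide)] at h
  simp only [ed] at h
  simp only [Psi0, Phi0, ed, flipAt, Function.update_apply, Prod.mk.injEq]
  norm_num
  cases h1 : σ ((-2:ℤ),(0:ℤ)) <;>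
    cases h2 : σ ((-3:ℤ),(0:ℤ)) <;>
    cases h3 : σ ((-1:ℤ),(0:ℤ)) <;>
    cases h4 : σ ((-2:ℤ),(1:ℤ)) <;>
    simp_all <;> omega


lemma Psi0_far (σ : Config) (y : Site) (h1 : y ≠ (0,0)) (h2 : y ≠ (-1,0)) (h3 : y ≠ (1,0)) (h4 : y ≠ (0,1)) (h5 : y ≠ (1,-1)) (h6 : y ≠ (0,-1)) (h7 : y ≠ (-1,-1)) (h8 : y ≠ (2,0)) (h9 : y ≠ (2,1)) (h10 : y ≠ (1,1)) (h11 : y ≠ (-1,1)) (h12 : y ≠ (-2,1)) (h13 : y ≠ (-2,0)) :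
    Psi0 (flipAt σ y) = Psi0 σ := by
  simp only [Psi0, Phi0, ed, flipAt, Function.update_of_ne (Ne.symm h1), Function.update_of_ne (Ne.symm h2), Function.update_of_ne (Ne.symm h3), Function.update_of_ne (Ne.symm h4), Function.update_of_ne (Ne.symm h5), Function.update_of_ne (Ne.symm h6), Function.update_of_ne (Ne.symm h7), Function.update_of_ne (Ne.symm h8), Function.update_of_ne (Ne.symm h9), Function.update_of_ne (Ne.symm h10), Function.update_of_ne (Ne.symm h11), Function.update_of_ne (Ne.symm h12), Function.update_of_ne (Ne.symm h13)]
  rfl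


set_option maxHeartbeats 4000000 in
lemma Psi0_flip_le (σ : Config) (y : Site) (h : LegalMaj σ y) :
    Psi0 (flipAt σ y) ≤ Psi0 σ := by
  by_cases e1 : y = (0,0)
  · subst e1; linarith [flip_case0 σ h]
  by_cases e2 : y = (-1,0)
  · subst e2; exact flip_case1 σ h
  by_cases e3 : y = (1,0)
  · subst e3; exact flip_case2 σ h
  by_cases e4 : y = (0,1)
  · subst e4; exact flip_case3 σ h
  by_cases e5 : y = (1,-1)
  · subst e5; exact flip_case4 σ h
  by_cases e6 : y = (0,-1)
  · subst e6; exact flip_case5 σ h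
  by_cases e7 : y = (-1,-1)
  · subst e7; exact flip_case6 σ h
  by_cases e8 : y = (2,0)
  · subst e8; exact flip_case7 σ h
  by_cases e9 : y = (2,1)
  · subst e9; exact flip_case8 σ h
  by_cases e10 : y = (1,1)
  · subst e10; exact flip_case9 σ h
  by_cases e11 : y = (-1,1)
  · subst e11; exact flip_case10 σ h
  by_cases e12 : y = (-2,1)
  · subst e12; exact flip_case11 σ h
  by_cases e13 : y = (-2,0)
  · subst e13; exact flip_case12 σ h
  exact le_of_eq (Psi0_far σ y e1 e2 e3 e4 e5 e6 e7 e8 e9 e10 e11 e12 e13)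

/- ## counting at the origin -/

def flips0 (η : ℕ → Config) (n : ℕ) : Finset ℕ :=
  (Finset.range n).filter (fun k => η (k+1) (0,0) ≠ η k (0,0))

lemma psi_mono (η : ℕ → Config) (m : ℕ∞) (hseq : IsLegalFlipSeqMaj η m) :
    ∀ n : ℕ, (n : ℕ∞) ≤ m → Psi0 (η n) + 2 * ((flips0 η n).card : ℤ) ≤ Psi0 (η 0) := by
  intro n
  induction n with
  | zero => intro _; simp [flips0]
  | succ k ih =>
    intro hn
    have hk1 : ((k : ℕ∞) + 1) ≤ m := by
      have : ((k+1 : ℕ) : ℕ∞) = (k : ℕ∞) + 1 := by push_cast; ring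
      rwa [this] at hn
    have hk : (k : ℕ∞) ≤ m := le_trans (by exact le_self_add) hk1
    obtain ⟨z, hzleg, hzflip⟩ := hseq k hk1
    have ih' := ih hk
    have hcard : flips0 η (k+1) = if η (k+1) (0,0) ≠ η k (0,0)
        then insert k (flips0 η k) else flips0 η k := by
      simp [flips0, Finset.range_add_one, Finset.filter_insert]
    by_cases hz0 : z = ((0:ℤ),(0:ℤ))
    · subst hz0
      have hflip : η (k+1) (0,0) ≠ η k (0,0) := by
        rw [hzflip]
        simp [flipAt]
      have hpsi := flip_case0 (η k) hzleg
      rw [← hzflip] at hpsi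
      rw [hcard, if_pos hflip]
      have hk_not : k ∉ flips0 η k := by simp [flips0]
      rw [Finset.card_insert_of_notMem hk_not]
      push_cast
      omega
    · have hflip : η (k+1) (0,0) = η k (0,0) := by
        rw [hzflip]
        exact Function.update_of_ne (Ne.symm hz0) _ _
      have hpsi := Psi0_flip_le (η k) z hzleg
      rw [← hzflip] at hpsi
      rw [hcard, if_neg (not_not_intro hflip)]
      omega

theorem stmt4_origin (η : ℕ → Config) (m : ℕ∞) (hseq : IsLegalFlipSeqMaj η m) :
    {n : ℕ | (n : ℕ∞) + 1 ≤ m ∧ η (n + 1) (0,0) ≠ η n (0,0)}.encard ≤ 8 := by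
  by_contra hc
  push_neg at hc
  have h9 : (9 : ℕ∞) ≤ {n : ℕ | (n : ℕ∞) + 1 ≤ m ∧ η (n + 1) (0,0) ≠ η n (0,0)}.encard := by
    rw [show (9:ℕ∞) = 8 + 1 by norm_num]
    exact (ENat.add_one_le_iff (by norm_num)).mpr hc
  obtain ⟨t, hts, htc⟩ := Set.exists_subset_encard_eq h9
  have htfin : t.Finite := Set.finite_of_encard_eq_coe (k := 9) (by exact_mod_cast htc)
  have hcard9 : htfin.toFinset.card = 9 := by
    have := htfin.encard_eq_coe_toFinset_card
    rw [htc] at this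
    exact_mod_cast this.symm
  have hne : htfin.toFinset.Nonempty := by
    rw [← Finset.card_pos, hcard9]; norm_num
  set M := htfin.toFinset.max' hne with hM
  have hMmem : M ∈ t := by
    have := htfin.toFinset.max'_mem hne
    rwa [Set.Finite.mem_toFinset] at this
  have hMS := hts hMmem
  have hNm : ((M + 1 : ℕ) : ℕ∞) ≤ m := by
    have : ((M+1 : ℕ) : ℕ∞) = (M : ℕ∞) + 1 := by push_cast; ring
    rw [this]; exact hMS.1
  have hsub : htfin.toFinset ⊆ flips0 η (M+1) := by
    intro k hk
    have hkt : k ∈ t := by rwa [Set.Finite.mem_toFinset] at hk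
    have hkS := hts hkt
    simp only [flips0, Finset.mem_filter, Finset.mem_range]
    exact ⟨Nat.lt_succ_of_le (htfin.toFinset.le_max' k hk), hkS.2⟩
  have hge : 9 ≤ (flips0 η (M+1)).card := by
    rw [← hcard9]; exact Finset.card_le_card hsub
  have := psi_mono η m hseq (M+1) hNm
  have h0le := Psi0_nonneg (η (M+1))
  have h16 := Psi0_le (η 0)
  omega

/- ## transport by lattice automorphisms -/

def gm (x : Site) (v : Site) : Site :=
  if Even (x.1 + x.2) then (v.1 - x.1, v.2 - x.2) else (v.1 - x.1, x.2 - v.2)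

def hm (x : Site) (u : Site) : Site :=
  if Even (x.1 + x.2) then (u.1 + x.1, u.2 + x.2) else (u.1 + x.1, x.2 - u.2)

lemma gm_hm (x u : Site) : gm x (hm x u) = u := by
  unfold gm hm; split_ifs <;> simp [Prod.ext_iff] <;> ring

lemma hm_gm (x v : Site) : hm x (gm x v) = v := by
  unfold gm hm; split_ifs <;> simp [Prod.ext_iff] <;> ring

lemma hm_zero (x : Site) : hm x (0 : Site) = x := by
  unfold hm; split_ifs <;> simp [Prod.ext_iff]

lemma nbrs_gm (x v : Site) : nbrs (gm x v) = (nbrs v).map (gm x) := by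
  unfold nbrs gm
  split_ifs <;> simp_all [Int.even_iff, Prod.ext_iff] <;> omega

lemma legal_gm (σ : Config) (x y : Site) (h : LegalMaj σ y) :
    LegalMaj (fun u => σ (hm x u)) (gm x y) := by
  unfold LegalMaj at *
  rw [nbrs_gm, List.countP_map]
  simpa [Function.comp_def, hm_gm] using h

lemma flip_gm (σ : Config) (x y : Site) :
    (fun u => flipAt σ y (hm x u)) = flipAt (fun u => σ (hm x u)) (gm x y) := by
  funext u
  by_cases hu : u = gm x y
  · subst hu
    rw [show hm x (gm x y) = y from hm_gm x y]
    simp [flipAt]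
    rw [hm_gm]
  · have hhu : hm x u ≠ y := by
      intro he
      apply hu
      rw [← he, gm_hm]
    simp [flipAt, Function.update_of_ne hhu, Function.update_of_ne hu]


/-- in the zero-temperature majority dynamics on ℍ, in every legal flip
sequence (finite or infinite, starting from an arbitrary initial configuration `σ = η 0`),
every site is flipped at most 8 times. -/
theorem stmt4 (σ : Config) (η : ℕ → Config) (m : ℕ∞) (h0 : η 0 = σ)
    (hseq : IsLegalFlipSeqMaj η m) (x : Site) :
    {n : ℕ | (n : ℕ∞) + 1 ≤ m ∧ η (n + 1) x ≠ η n x}.encard ≤ 8 := by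
  have hseq' : IsLegalFlipSeqMaj (fun n u => η n (hm x u)) m := by
    intro n hn
    obtain ⟨z, hz, he⟩ := hseq n hn
    refine ⟨gm x z, legal_gm _ _ _ hz, ?_⟩
    rw [← flip_gm]
    funext u
    show η (n + 1) (hm x u) = flipAt (η n) z (hm x u)
    rw [he]
  have := stmt4_origin (fun n u => η n (hm x u)) m hseq'
  simpa [Prod.mk_zero_zero, hm_zero] using this
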